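/- For every u ∈ ℝ and v ∈ (0, π), one has Im(1/(1 + e^{−(u+iv)})) > 0, and for every u ∈ ℝ and v ∈ (−π, 0), one has Im(1/(1 + e^{−(u+iv)})) < 0. Consequently, for each fixed v ∈ (−π, 0), the function u ↦ −Im Li₂(−e^{u+iv}) is strictly concave on ℝ, and for each fixed v ∈ (0, π), the function u ↦ Im Li₂(−e^{u+iv}) is strictly concave on ℝ. -/

import Mathlib

open Real

/-- The dilogarithm `Li₂(z) = -∫₀¹ Log(1 - z t) / t dt`. -/
noncomputable def Li2 (z : ℂ) : ℂ :=
  -∫ t in (0:ℝ)..(1:ℝ), Complex.log (1 - z * (t : ℂ)) / (t : ℂ)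

noncomputable def G (v : ℝ) (s : ℝ) : ℂ :=
  Complex.log (1 + Complex.exp (v * Complex.I) * s) / s

lemma im_aux (u v : ℝ) :
    ((1 + Complex.exp (-((u : ℂ) + (v : ℂ) * Complex.I)))⁻¹).im =
      Real.exp (-u) * Real.sin v /
        Complex.normSq (1 + Complex.exp (-((u : ℂ) + (v : ℂ) * Complex.I))) := by
  rw [Complex.inv_im]
  congr 1
  simp [Complex.add_im, Complex.exp_im]

lemma z_im (u v : ℝ) :
    (1 + Complex.exp (-((u : ℂ) + (v : ℂ) * Complex.I))).im = -(Real.exp (-u) * Real.sin v) := by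
  simp [Complex.add_im, Complex.exp_im]

lemma normSq_pos (u v : ℝ) (hv : Real.sin v ≠ 0) :
    0 < Complex.normSq (1 + Complex.exp (-((u : ℂ) + (v : ℂ) * Complex.I))) := by
  have h2 : (1 + Complex.exp (-((u : ℂ) + (v : ℂ) * Complex.I))).im ≠ 0 := by
    rw [z_im]
    simp [Real.exp_ne_zero, hv]
  exact Complex.normSq_pos.2 fun h => h2 (by rw [h]; simp)

lemma mem_slit (v : ℝ) (hv : Real.sin v ≠ 0) {s : ℝ} (hs : s ≠ 0) :
    (1 + Complex.exp ((v : ℝ) * Complex.I) * (s : ℂ)) ∈ Complex.slitPlane := by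
  refine Complex.mem_slitPlane_iff.2 (Or.inr ?_)
  simp [Complex.add_im, Complex.exp_ofReal_mul_I_im, hv, hs]

lemma contAt_G (v : ℝ) (hv : Real.sin v ≠ 0) {s : ℝ} (hs : s ≠ 0) :
    ContinuousAt (G v) s := by
  have h1 : ContinuousAt (fun s : ℝ => (1 + Complex.exp ((v : ℝ) * Complex.I) * (s : ℂ))) s := by
    fun_prop
  have h2 : ContinuousAt (fun s : ℝ => Complex.log (1 + Complex.exp ((v : ℝ) * Complex.I) * (s : ℂ))) s :=
    ContinuousAt.comp (x := s) (g := Complex.log)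
      ((Complex.hasDerivAt_log (mem_slit v hv hs)).continuousAt) h1
  exact h2.div Complex.continuous_ofReal.continuousAt (by exact_mod_cast hs)

noncomputable def Gt (v : ℝ) (s : ℝ) : ℂ :=
  if s = 0 then Complex.exp ((v : ℝ) * Complex.I) else G v s

lemma hasDerivAt_log_inner (v : ℝ) :
    HasDerivAt (fun s : ℝ => Complex.log (1 + Complex.exp ((v : ℝ) * Complex.I) * s))
      (Complex.exp ((v : ℝ) * Complex.I)) 0 := by
  have hinner : HasDerivAt (fun z : ℂ => 1 + Complex.exp ((v : ℝ) * Complex.I) * z)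
      (Complex.exp ((v : ℝ) * Complex.I)) ((0 : ℝ) : ℂ) := by
    simpa using ((hasDerivAt_id (((0:ℝ) : ℂ))).const_mul
      (Complex.exp ((v : ℝ) * Complex.I))).const_add 1
  have hmem : (1 + Complex.exp ((v : ℝ) * Complex.I) * (((0:ℝ)) : ℂ)) ∈ Complex.slitPlane := by
    simp [Complex.mem_slitPlane_iff]
  have hc := (Complex.hasDerivAt_log hmem).comp (((0:ℝ)) : ℂ) hinner
  have := hc.comp_ofReal
  simpa [Function.comp] using this

lemma contOn_Gt (v : ℝ) (hv : Real.sin v ≠ 0) (x : ℝ) :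
    ContinuousOn (Gt v) (Set.Icc 0 x) := by
  intro s hs
  by_cases h0 : s = 0
  · subst h0
    rw [← continuousWithinAt_diff_self]
    have hd := hasDerivAt_log_inner v
    rw [hasDerivAt_iff_tendsto_slope] at hd
    have hsub : Set.Icc (0:ℝ) x \ {0} ⊆ {(0:ℝ)}ᶜ := fun t ht => ht.2
    have hG0 : Gt v 0 = Complex.exp ((v : ℝ) * Complex.I) := by simp [Gt]
    unfold ContinuousWithinAt
    rw [hG0]
    apply Filter.Tendsto.congr' _ (hd.mono_left (nhdsWithin_mono _ hsub))
    filter_upwards [self_mem_nhdsWithin] with t ht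
    have ht0 : (t : ℝ) ≠ 0 := ht.2
    have htc : (t : ℂ) ≠ 0 := by exact_mod_cast ht0
    simp only [slope, Gt, ht0, if_false, G, sub_zero, vsub_eq_sub]
    rw [Complex.real_smul]
    rw [show Complex.log (1 + Complex.exp ((v : ℝ) * Complex.I) * (0:ℝ)) = 0 by
      simp [Complex.log_one]]
    push_cast
    field_simp
    rw [sub_zero]
  · have hev : (fun t : ℝ => G v t) =ᶠ[nhds s] Gt v := by
      filter_upwards [isOpen_compl_singleton.mem_nhds h0] with t ht
      simp [Gt, Set.mem_compl_singleton_iff.mp ht]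
    exact ((contAt_G v hv h0).congr hev).continuousWithinAt

lemma intInt_G (v : ℝ) (hv : Real.sin v ≠ 0) {x : ℝ} (hx : 0 ≤ x) :
    IntervalIntegrable (G v) MeasureTheory.volume 0 x := by
  have h1 : IntervalIntegrable (Gt v) MeasureTheory.volume 0 x := by
    apply ContinuousOn.intervalIntegrable
    rw [Set.uIcc_of_le hx]; exact contOn_Gt v hv x
  rw [intervalIntegrable_iff] at h1 ⊢
  apply h1.congr_fun ?_ measurableSet_uIoc
  intro t ht
  rw [Set.uIoc_of_le hx] at ht
  have : t ≠ 0 := ne_of_gt ht.1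
  simp [Gt, this]

lemma Li2_eq (u v : ℝ) :
    Li2 (-Complex.exp ((u : ℂ) + (v : ℂ) * Complex.I)) =
      -∫ s in (0:ℝ)..Real.exp u, G v s := by
  rw [Li2]
  congr 1
  have key : ∀ t : ℝ, Complex.log (1 - -Complex.exp ((u : ℂ) + (v : ℂ) * Complex.I) * t) / t
      = Real.exp u • G v (Real.exp u * t) := by
    intro t
    by_cases ht : t = 0
    · simp [ht, G]
    · have hcast : ((Real.exp u * t : ℝ) : ℂ) = Complex.exp (u : ℂ) * (t : ℂ) := by
        push_cast [Complex.ofReal_exp]; ring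
      have hne : Complex.exp ((u : ℂ)) ≠ 0 := Complex.exp_ne_zero _
      have htne : (t : ℂ) ≠ 0 := by exact_mod_cast ht
      rw [neg_mul, sub_neg_eq_add, G, hcast, Complex.real_smul, Complex.ofReal_exp,
        show Complex.exp ((u : ℂ) + (v : ℂ) * Complex.I)
          = Complex.exp ((v : ℝ) * Complex.I) * Complex.exp (u : ℂ) by
            rw [← Complex.exp_add]; ring_nf]
      field_simp
  rw [intervalIntegral.integral_congr (g := fun t : ℝ => Real.exp u • G v (Real.exp u * t))
    (fun t _ => key t), intervalIntegral.integral_smul,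
    intervalIntegral.smul_integral_comp_mul_left (G v) (Real.exp u)]
  norm_num

lemma HasDerivAt.cim {f : ℝ → ℂ} {f' : ℂ} {x : ℝ} (hf : HasDerivAt f f' x) :
    HasDerivAt (fun x => (f x).im) f'.im x := by
  simpa [Function.comp_def] using (Complex.imCLM.hasFDerivAt.comp x hf.hasFDerivAt).hasDerivAt

lemma exp_split (u v : ℝ) :
    Complex.exp ((u : ℂ) + (v : ℂ) * Complex.I)
      = Complex.exp ((v : ℝ) * Complex.I) * Complex.exp (u : ℂ) := by
  rw [← Complex.exp_add]; ring_nf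

lemma hasDerivAt_li2im (v : ℝ) (hv : Real.sin v ≠ 0) (u : ℝ) :
    HasDerivAt (fun u : ℝ => (Li2 (-Complex.exp ((u : ℂ) + (v : ℂ) * Complex.I))).im)
      (-(Complex.log (1 + Complex.exp ((u : ℂ) + (v : ℂ) * Complex.I))).im) u := by
  have hmeas : StronglyMeasurableAtFilter (G v) (nhds (Real.exp u)) MeasureTheory.volume :=
    ⟨Set.Ioi 0, Ioi_mem_nhds (Real.exp_pos u),
      (ContinuousOn.aestronglyMeasurable
        (fun s hs => (contAt_G v hv (ne_of_gt hs)).continuousWithinAt) measurableSet_Ioi)⟩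
  have hF : HasDerivAt (fun y : ℝ => ∫ s in (0:ℝ)..y, G v s) (G v (Real.exp u)) (Real.exp u) :=
    intervalIntegral.integral_hasDerivAt_right (intInt_G v hv (Real.exp_pos u).le) hmeas
      (contAt_G v hv (Real.exp_pos u).ne')
  have hcomp := hF.scomp u (Real.hasDerivAt_exp u)
  have hval : Real.exp u • G v (Real.exp u)
      = Complex.log (1 + Complex.exp ((u : ℂ) + (v : ℂ) * Complex.I)) := by
    rw [G, Complex.real_smul, Complex.ofReal_exp, exp_split]
    field_simp
  have h2 : HasDerivAt (fun u : ℝ => ∫ s in (0:ℝ)..Real.exp u, G v s)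
      (Complex.log (1 + Complex.exp ((u : ℂ) + (v : ℂ) * Complex.I))) u := by
    rw [← hval]
    simpa [Function.comp_def] using hcomp
  have h3 := (h2.neg).cim
  have hfun : (fun u : ℝ => (Li2 (-Complex.exp ((u : ℂ) + (v : ℂ) * Complex.I))).im)
      = fun u : ℝ => (-∫ s in (0:ℝ)..Real.exp u, G v s).im := by
    funext w; rw [Li2_eq]
  rw [hfun]
  simpa using h3

lemma hasDerivAt_neg_log_im (v : ℝ) (hv : Real.sin v ≠ 0) (u : ℝ) :
    HasDerivAt (fun u : ℝ => -(Complex.log (1 + Complex.exp ((u : ℂ) + (v : ℂ) * Complex.I))).im)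
      (-(((1 + Complex.exp (-((u : ℂ) + (v : ℂ) * Complex.I)))⁻¹).im)) u := by
  have hmem : (1 + Complex.exp ((u : ℂ) + (v : ℂ) * Complex.I)) ∈ Complex.slitPlane := by
    refine Complex.mem_slitPlane_iff.2 (Or.inr ?_)
    simp [Complex.add_im, Complex.exp_im, Real.exp_ne_zero, hv]
  have hinner : HasDerivAt (fun z : ℂ => 1 + Complex.exp (z + (v : ℂ) * Complex.I))
      (Complex.exp ((u : ℂ) + (v : ℂ) * Complex.I)) ((u : ℂ)) := by
    have h := (Complex.hasDerivAt_exp ((u : ℂ) + (v : ℂ) * Complex.I)).comp (u : ℂ)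
      ((hasDerivAt_id ((u : ℂ))).add_const ((v : ℂ) * Complex.I))
    simpa [Function.comp] using h.const_add 1
  have hlog := (Complex.hasDerivAt_log hmem).comp ((u : ℂ)) hinner
  have hreal := hlog.comp_ofReal
  have h1 : (1 : ℂ) + Complex.exp ((u : ℂ) + (v : ℂ) * Complex.I) ≠ 0 :=
    Complex.slitPlane_ne_zero hmem
  have h2 : (1 : ℂ) + Complex.exp (-((u : ℂ) + (v : ℂ) * Complex.I)) ≠ 0 :=
    Complex.normSq_pos.mp (normSq_pos u v hv)
  have hval : (1 + Complex.exp ((u : ℂ) + (v : ℂ) * Complex.I))⁻¹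
        * Complex.exp ((u : ℂ) + (v : ℂ) * Complex.I)
      = (1 + Complex.exp (-((u : ℂ) + (v : ℂ) * Complex.I)))⁻¹ := by
    rw [Complex.exp_neg] at h2 ⊢
    field_simp
    rw [add_comm (Complex.exp ((u : ℂ) + (v : ℂ) * Complex.I)) 1, div_self h1]
  have h3 := (hreal.cim).neg
  rw [hval] at h3
  simpa [Function.comp_def, Pi.neg_def] using h3

lemma im_inv_pos (u v : ℝ) (hv : 0 < Real.sin v) :
    0 < ((1 + Complex.exp (-((u : ℂ) + (v : ℂ) * Complex.I)))⁻¹).im := by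
  rw [im_aux]
  exact div_pos (mul_pos (Real.exp_pos _) hv) (normSq_pos u v hv.ne')

lemma im_inv_neg (u v : ℝ) (hv : Real.sin v < 0) :
    ((1 + Complex.exp (-((u : ℂ) + (v : ℂ) * Complex.I)))⁻¹).im < 0 := by
  rw [im_aux]
  exact div_neg_of_neg_of_pos (mul_neg_of_pos_of_neg (Real.exp_pos _) hv) (normSq_pos u v hv.ne)

/-- Sign inequalities for the Hessian entries and consequent strict concavity
(the computational core of Proposition 3.3 (concavSgen)):
`Im(1/(1+e^{-(u+iv)})) > 0` for `v ∈ (0,π)`, `< 0` for `v ∈ (-π,0)`; hence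
`u ↦ -Im Li₂(-e^{u+iv})` is strictly concave for `v ∈ (-π,0)` and
`u ↦ Im Li₂(-e^{u+iv})` is strictly concave for `v ∈ (0,π)`. -/
theorem stmt_19 :
    (∀ (u : ℝ), ∀ v ∈ Set.Ioo (0 : ℝ) π,
      0 < ((1 + Complex.exp (-((u : ℂ) + (v : ℂ) * Complex.I)))⁻¹).im) ∧
    (∀ (u : ℝ), ∀ v ∈ Set.Ioo (-π) (0 : ℝ),
      ((1 + Complex.exp (-((u : ℂ) + (v : ℂ) * Complex.I)))⁻¹).im < 0) ∧
    (∀ v ∈ Set.Ioo (-π) (0 : ℝ),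
      StrictConcaveOn ℝ (Set.univ : Set ℝ)
        (fun u : ℝ => -(Li2 (-Complex.exp ((u : ℂ) + (v : ℂ) * Complex.I))).im)) ∧
    (∀ v ∈ Set.Ioo (0 : ℝ) π,
      StrictConcaveOn ℝ (Set.univ : Set ℝ)
        (fun u : ℝ => (Li2 (-Complex.exp ((u : ℂ) + (v : ℂ) * Complex.I))).im)) := by
  refine ⟨fun u v hv => im_inv_pos u v (Real.sin_pos_of_pos_of_lt_pi hv.1 hv.2),
    fun u v hv => im_inv_neg u v (Real.sin_neg_of_neg_of_neg_pi_lt hv.2 hv.1), ?_, ?_⟩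
  · intro v hv
    have hsin : Real.sin v < 0 := Real.sin_neg_of_neg_of_neg_pi_lt hv.2 hv.1
    apply strictConcaveOn_of_deriv2_neg convex_univ
    · exact fun x _ => ((hasDerivAt_li2im v hsin.ne x).neg.continuousAt).continuousWithinAt
    · intro x _
      have hd1 : deriv (fun u : ℝ =>
          -(Li2 (-Complex.exp ((u : ℂ) + (v : ℂ) * Complex.I))).im)
          = fun u : ℝ => (Complex.log (1 + Complex.exp ((u : ℂ) + (v : ℂ) * Complex.I))).im := by
        funext w
        simpa using (hasDerivAt_li2im v hsin.ne w).neg.deriv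
      have hd2 : HasDerivAt
          (fun u : ℝ => (Complex.log (1 + Complex.exp ((u : ℂ) + (v : ℂ) * Complex.I))).im)
          (((1 + Complex.exp (-((x : ℂ) + (v : ℂ) * Complex.I)))⁻¹).im) x := by
        simpa [Pi.neg_def] using (hasDerivAt_neg_log_im v hsin.ne x).neg
      show deriv (deriv _) x < 0
      rw [hd1, hd2.deriv]
      exact im_inv_neg x v hsin
  · intro v hv
    have hsin : 0 < Real.sin v := Real.sin_pos_of_pos_of_lt_pi hv.1 hv.2
    apply strictConcaveOn_of_deriv2_neg convex_univ
    · exact fun x _ => ((hasDerivAt_li2im v hsin.ne' x).continuousAt).continuousWithinAt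
    · intro x _
      have hd1 : deriv (fun u : ℝ =>
          (Li2 (-Complex.exp ((u : ℂ) + (v : ℂ) * Complex.I))).im)
          = fun u : ℝ => -(Complex.log (1 + Complex.exp ((u : ℂ) + (v : ℂ) * Complex.I))).im :=
        funext fun w => (hasDerivAt_li2im v hsin.ne' w).deriv
      show deriv (deriv _) x < 0
      rw [hd1, (hasDerivAt_neg_log_im v hsin.ne' x).deriv]
      simpa using im_inv_pos x v hsin
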